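/- Let Ω ⊆ ℂ be a domain starlike at infinity with 0 ∈ NP(Ω), let t > 0 with it ∈ Ω, and let β ∈ (π/2, π] be such that {i t e^{−iθ} : 0 ≤ θ < β} ⊆ Ω. Then for every ε ∈ (0,β) there exists δ ∈ (0,1) such that for each x ∈ [t(1−δ), t], either α⁺_{Ω,0}(x) ≤ π − (β − ε) or α⁺_{Ω,0}(x) ≥ β − ε. -/

import Mathlib

open Complex Set

def StarlikeAtInf (Ω : Set ℂ) : Prop :=
  ∀ z ∈ Ω, ∀ s : ℝ, 0 ≤ s → z + s * I ∈ Ω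

def NP (Ω : Set ℂ) : Set ℂ :=
  {p | ∃ t₀ : ℝ, 0 ≤ t₀ ∧ ∀ s : ℝ, t₀ < s → p + s * I ∈ Ω}

noncomputable def alphaPlus (Ω : Set ℂ) (p : ℂ) (t : ℝ) : ℝ :=
  min Real.pi (sSup {α : ℝ | 0 < α ∧ ∀ θ ∈ Set.Icc (0 : ℝ) α,
    p + I * t * Complex.exp (-(I * θ)) ∈ Ω})

theorem stmt_12 (Ω : Set ℂ) (hopen : IsOpen Ω) (hconn : IsConnected Ω)
    (hstar : StarlikeAtInf Ω) (hNP : (0 : ℂ) ∈ NP Ω)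
    (t : ℝ) (ht : 0 < t) (htΩ : (t : ℂ) * I ∈ Ω)
    (β : ℝ) (hβ : Real.pi / 2 < β) (hβ' : β ≤ Real.pi)
    (hL : ∀ θ : ℝ, 0 ≤ θ → θ < β → I * t * Complex.exp (-(I * θ)) ∈ Ω) :
    ∀ ε : ℝ, 0 < ε → ε < β → ∃ δ : ℝ, 0 < δ ∧ δ < 1 ∧
      ∀ x : ℝ, t * (1 - δ) ≤ x → x ≤ t →
        alphaPlus Ω 0 x ≤ Real.pi - (β - ε) ∨ β - ε ≤ alphaPlus Ω 0 x := by
  intro ε hε hεβ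
  set f : ℝ → ℂ := fun θ => I * (t : ℂ) * Complex.exp (-(I * θ)) with hf
  have hKcomp : IsCompact (f '' Icc (0 : ℝ) (β - ε)) := by
    apply isCompact_Icc.image
    unfold f
    continuity
  have hKsub : f '' Icc (0 : ℝ) (β - ε) ⊆ Ω := by
    rintro _ ⟨θ, ⟨h0, h1⟩, rfl⟩
    exact hL θ h0 (lt_of_le_of_lt h1 (by linarith))
  obtain ⟨r, hr, hthick⟩ := hKcomp.exists_thickening_subset_open hopen hKsub
  refine ⟨min (1/2) (r / (2 * t)), ?_, ?_, ?_⟩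
  · positivity
  · exact lt_of_le_of_lt (min_le_left _ _) (by norm_num)
  intro x hx1 hx2
  have hδt : t * min (1/2) (r / (2 * t)) ≤ r / 2 := by
    calc t * min (1/2) (r / (2 * t)) ≤ t * (r / (2 * t)) :=
          mul_le_mul_of_nonneg_left (min_le_right _ _) ht.le
      _ = r / 2 := by field_simp
  have hmem : ∀ θ ∈ Icc (0 : ℝ) (β - ε),
      (0 : ℂ) + I * x * Complex.exp (-(I * θ)) ∈ Ω := by
    intro θ hθ
    apply hthick
    rw [Metric.mem_thickening_iff]
    refine ⟨f θ, ⟨θ, hθ, rfl⟩, ?_⟩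
    have heq : (0 : ℂ) + I * x * Complex.exp (-(I * θ)) - f θ
        = I * ((x : ℂ) - t) * Complex.exp (-(I * θ)) := by
      simp only [hf]; ring
    rw [Complex.dist_eq, heq]
    have hnorm : ‖Complex.exp (-(I * θ))‖ = 1 := by
      rw [Complex.norm_exp]; simp
    rw [norm_mul, norm_mul, hnorm, Complex.norm_I, one_mul, mul_one]
    have hcast : ((x : ℂ) - t) = ((x - t : ℝ) : ℂ) := by push_cast; ring
    rw [hcast, Complex.norm_real, Real.norm_eq_abs, abs_of_nonpos (by linarith)]
    have h1 : t - x ≤ t * min (1/2) (r / (2 * t)) := by nlinarith [hx1]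
    linarith
  set S := {α : ℝ | 0 < α ∧ ∀ θ ∈ Set.Icc (0 : ℝ) α,
    (0 : ℂ) + I * (x : ℂ) * Complex.exp (-(I * θ)) ∈ Ω} with hS
  have hβεS : β - ε ∈ S := ⟨by linarith, hmem⟩
  by_cases hb : BddAbove S
  · right
    unfold alphaPlus
    apply le_min
    · linarith
    · exact le_csSup hb hβεS
  · left
    unfold alphaPlus
    rw [show sSup {α : ℝ | 0 < α ∧ ∀ θ ∈ Set.Icc (0 : ℝ) α,
      (0 : ℂ) + I * (x : ℂ) * Complex.exp (-(I * θ)) ∈ Ω} = sSup S from rfl,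
      Real.sSup_of_not_bddAbove hb, min_eq_right Real.pi_pos.le]
    linarith
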